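/- Let g be a convex differentiable function on ℝⁿ whose gradient is L-Lipschitz. Then for all x, y: ‖∇g(y) − ∇g(x)‖² ≤ 2L·(g(y) − g(x) − ⟨∇g(x), y − x⟩). -/

import Mathlib

open RealInnerProductSpace

section aux

variable {n : ℕ}

private lemma myLineDeriv (g : EuclideanSpace ℝ (Fin n) → ℝ)
    (G : EuclideanSpace ℝ (Fin n) → EuclideanSpace ℝ (Fin n))
    (hgrad : ∀ x, HasGradientAt g (G x) x) (x d : EuclideanSpace ℝ (Fin n)) (t : ℝ) :
    HasDerivAt (fun s : ℝ => g (x + s • d)) ⟪G (x + t • d), d⟫ t := by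
  have hc : HasDerivAt (fun s : ℝ => x + s • d) d t := by
    simpa using ((hasDerivAt_id t).smul_const d).const_add x
  have hg := (hgrad (x + t • d)).hasFDerivAt
  have h := hg.comp_hasDerivAt t hc
  simp [InnerProductSpace.toDual_apply_apply] at h
  exact h

private lemma grad_ineq (g : EuclideanSpace ℝ (Fin n) → ℝ)
    (G : EuclideanSpace ℝ (Fin n) → EuclideanSpace ℝ (Fin n))
    (hconv : ConvexOn ℝ Set.univ g)
    (hgrad : ∀ x, HasGradientAt g (G x) x) (x y : EuclideanSpace ℝ (Fin n)) :
    g x + ⟪G x, y - x⟫ ≤ g y := by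
  set h : ℝ → ℝ := fun s => g (x + s • (y - x)) with hh_def
  have hd : ∀ t : ℝ, HasDerivAt h ⟪G (x + t • (y - x)), y - x⟫ t :=
    fun t => myLineDeriv g G hgrad x (y - x) t
  have hh : ConvexOn ℝ Set.univ h := by
    have := hconv.comp_affineMap (AffineMap.lineMap x y : ℝ →ᵃ[ℝ] EuclideanSpace ℝ (Fin n))
    have heq : (g ∘ (AffineMap.lineMap x y : ℝ →ᵃ[ℝ] EuclideanSpace ℝ (Fin n))) = h := by
      funext s
      show g _ = g _
      congr 1
      simp [AffineMap.lineMap_apply]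
      abel
    rw [heq] at this
    simpa using this
  have key := hh.deriv_le_slope (Set.mem_univ (0:ℝ)) (Set.mem_univ (1:ℝ)) one_pos
    (hd 0).differentiableAt
  rw [(hd 0).deriv] at key
  have hs : slope h 0 1 = h 1 - h 0 := by simp [slope_def_field]
  have h0 : h 0 = g x := by simp [hh_def]
  have h1 : h 1 = g y := by simp [hh_def]
  rw [hs, h0, h1] at key
  simp only [zero_smul, add_zero] at key
  linarith

private lemma descent (g : EuclideanSpace ℝ (Fin n) → ℝ)
    (G : EuclideanSpace ℝ (Fin n) → EuclideanSpace ℝ (Fin n)) (L : ℝ)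
    (hgrad : ∀ x, HasGradientAt g (G x) x)
    (hlip : ∀ x y, ‖G x - G y‖ ≤ L * ‖x - y‖) (x y : EuclideanSpace ℝ (Fin n)) :
    g y ≤ g x + ⟪G x, y - x⟫ + L / 2 * ‖y - x‖ ^ 2 := by
  set d := y - x with hd_def
  set ψ : ℝ → ℝ := fun t => g x + t * ⟪G x, d⟫ + L * t ^ 2 * ‖d‖ ^ 2 / 2 - g (x + t • d)
    with hψ_def
  have hψd : ∀ t : ℝ, HasDerivAt ψ
      (⟪G x, d⟫ + L * t * ‖d‖ ^ 2 - ⟪G (x + t • d), d⟫) t := by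
    intro t
    have h1 : HasDerivAt (fun s : ℝ => g x + s * ⟪G x, d⟫ + L * s ^ 2 * ‖d‖ ^ 2 / 2)
        (⟪G x, d⟫ + L * t * ‖d‖ ^ 2) t := by
      have : HasDerivAt (fun s : ℝ => g x + s * ⟪G x, d⟫ + L * s ^ 2 * ‖d‖ ^ 2 / 2)
          (0 + (1 * ⟪G x, d⟫) + L * (2 * t ^ 1) * ‖d‖ ^ 2 / 2) t := by
        apply HasDerivAt.add
        apply HasDerivAt.add (hasDerivAt_const _ _)
        · exact (hasDerivAt_id t).mul_const _
        · exact (((hasDerivAt_pow 2 t).const_mul L).mul_const (‖d‖^2)).div_const 2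
      convert this using 1; ring
    exact h1.sub (myLineDeriv g G hgrad x d t)
  have hmono : MonotoneOn ψ (Set.Icc (0:ℝ) 1) := by
    apply monotoneOn_of_deriv_nonneg (convex_Icc 0 1)
    · exact (fun t _ => ((hψd t).continuousAt.continuousWithinAt))
    · exact fun t _ => ((hψd t).differentiableAt.differentiableWithinAt)
    · intro t ht
      rw [interior_Icc] at ht
      rw [(hψd t).deriv]
      have h2 : ⟪G (x + t • d) - G x, d⟫ ≤ ‖G (x + t • d) - G x‖ * ‖d‖ :=
        real_inner_le_norm _ _
      have h3 : ‖G (x + t • d) - G x‖ ≤ L * (t * ‖d‖) := by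
        have := hlip (x + t • d) x
        simpa [norm_smul, abs_of_pos ht.1] using this
      have h4 : ⟪G (x + t • d) - G x, d⟫ ≤ L * t * ‖d‖ ^ 2 := by
        calc ⟪G (x + t • d) - G x, d⟫ ≤ ‖G (x + t • d) - G x‖ * ‖d‖ := h2
        _ ≤ L * (t * ‖d‖) * ‖d‖ :=
          mul_le_mul_of_nonneg_right h3 (norm_nonneg _)
        _ = L * t * ‖d‖ ^ 2 := by ring
      rw [inner_sub_left] at h4
      linarith
  have key := hmono (Set.left_mem_Icc.2 zero_le_one) (Set.right_mem_Icc.2 zero_le_one)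
    zero_le_one
  simp only [hψ_def, zero_smul, one_smul, add_zero, zero_mul, zero_pow, mul_zero, zero_div,
    one_mul, one_pow, mul_one] at key
  have hxy : x + d = y := by rw [hd_def]; abel
  rw [hxy] at key
  linarith

end aux

/-- For a convex differentiable `g : ℝⁿ → ℝ` with `L`-Lipschitz gradient `G`, for all `x, y`:
`‖G y − G x‖² ≤ 2L (g y − g x − ⟨G x, y − x⟩)`. -/
theorem stmt_2 {n : ℕ} (g : EuclideanSpace ℝ (Fin n) → ℝ)
    (G : EuclideanSpace ℝ (Fin n) → EuclideanSpace ℝ (Fin n)) (L : ℝ)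
    (hconv : ConvexOn ℝ Set.univ g)
    (hgrad : ∀ x, HasGradientAt g (G x) x)
    (hlip : ∀ x y, ‖G x - G y‖ ≤ L * ‖x - y‖) :
    ∀ x y, ‖G y - G x‖ ^ 2 ≤ 2 * L * (g y - g x - ⟪G x, y - x⟫) := by
  intro x y
  rcases le_or_gt L 0 with hL | hL
  · -- degenerate case: gradient is constant and g is affine along x-y
    have hGxy : ‖G y - G x‖ = 0 := by
      have h1 := hlip y x
      have h2 : L * ‖y - x‖ ≤ 0 := mul_nonpos_of_nonpos_of_nonneg hL (norm_nonneg _)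
      have := le_antisymm (h1.trans h2) (norm_nonneg _)
      linarith [norm_nonneg (G y - G x), this]
    have hGeq : G y = G x := by
      rwa [norm_eq_zero, sub_eq_zero] at hGxy
    have b1 := grad_ineq g G hconv hgrad x y
    have b2 := grad_ineq g G hconv hgrad y x
    rw [hGeq] at b2
    have hxneg : (x - y : EuclideanSpace ℝ (Fin n)) = -(y - x) := by abel
    rw [hxneg, inner_neg_right] at b2
    have hbr : g y - g x - ⟪G x, y - x⟫ = 0 := by linarith
    rw [hGxy, hbr]
    norm_num
  · -- main case L > 0
    set v := G y - G x with hv_def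
    set z := y - L⁻¹ • v with hz_def
    have hB := grad_ineq g G hconv hgrad x z
    have hC := descent g G L hgrad hlip y z
    have hzy : z - y = -(L⁻¹ • v) := by rw [hz_def]; abel
    have hzx : z - x = (y - x) - L⁻¹ • v := by rw [hz_def]; abel
    have e1 : ⟪G y, z - y⟫ = -(L⁻¹ * ⟪G y, v⟫) := by
      rw [hzy, inner_neg_right, real_inner_smul_right]
    have e2 : ‖z - y‖ ^ 2 = L⁻¹ ^ 2 * ‖v‖ ^ 2 := by
      rw [hzy, norm_neg, norm_smul]
      rw [Real.norm_eq_abs, abs_of_pos (inv_pos.2 hL)]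
      ring
    have e3 : ⟪G x, z - x⟫ = ⟪G x, y - x⟫ - L⁻¹ * ⟪G x, v⟫ := by
      rw [hzx, inner_sub_right, real_inner_smul_right]
    have e4 : ⟪G y, v⟫ - ⟪G x, v⟫ = ‖v‖ ^ 2 := by
      rw [← inner_sub_left, ← hv_def, real_inner_self_eq_norm_sq]
    rw [e1, e2] at hC
    rw [e3] at hB
    have hL' : L ≠ 0 := ne_of_gt hL
    have key : g x + ⟪G x, y - x⟫ - L⁻¹ * ⟪G x, v⟫ ≤
        g y - L⁻¹ * ⟪G y, v⟫ + L / 2 * (L⁻¹ ^ 2 * ‖v‖ ^ 2) := by linarith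
    have hfin : L⁻¹ * (⟪G y, v⟫ - ⟪G x, v⟫) - L / 2 * (L⁻¹ ^ 2 * ‖v‖ ^ 2)
        = ‖v‖ ^ 2 / (2 * L) := by
      rw [e4]; field_simp; ring
    have : ‖v‖ ^ 2 / (2 * L) ≤ g y - g x - ⟪G x, y - x⟫ := by
      rw [← hfin]; linarith
    rw [div_le_iff₀ (by positivity)] at this
    linarith
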